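/- arXiv:0908.3437 — 2 statements merged into one kernel-verified Lean document; each statement's English description precedes it below -/
import Mathlib

section
/- Let C be a family of K-element subsets of {1,...,n} such that: (i) when S, S' are drawn independently and uniformly from C, the conditional distribution of Z = |S∩S'| given S' is the same for all values of S'; (ii) for every fixed S₀ ∈ C and i ∈ S₀, P{i ∈ S} = K/n for uniform random S ∈ C. Then E[exp(μ²Z)] ≤ (exp(μ²K) - 1)·K/n + 1. Consequently, for δ ∈ (0,1), the Bayes risk satisfies R* ≥ δ whenever μ ≤ √((1/K)·log(1 + 4n(1-δ)²/K)). -/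
open MeasureTheory Real Finset ProbabilityTheory
open scoped ENNReal NNReal


lemma gauss_exp_aux (c : ℝ) :
    Integrable (fun x => Real.exp (c * x)) (gaussianReal 0 1) ∧
    ∫ x, Real.exp (c * x) ∂(gaussianReal 0 1) = Real.exp (c ^ 2 / 2) := by
  have hpdf : gaussianReal 0 1
      = volume.withDensity (fun x => ((gaussianPDFReal 0 1 x).toNNReal : ℝ≥0∞)) :=
    gaussianReal_of_var_ne_zero 0 one_ne_zero
  have hmeas : Measurable fun x => (gaussianPDFReal 0 1 x).toNNReal :=
    (measurable_gaussianPDFReal 0 1).real_toNNReal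
  have hfun : ∀ x : ℝ, gaussianPDFReal 0 1 x * Real.exp (c * x)
      = ((Real.sqrt (2 * π))⁻¹ * Real.exp (c ^ 2 / 2)) * Real.exp (-(1/2) * (x - c) ^ 2) := by
    intro x
    simp only [gaussianPDFReal, NNReal.coe_one, mul_one, sub_zero]
    rw [mul_assoc, ← Real.exp_add, mul_assoc, ← Real.exp_add]
    congr 1
    ring
  have hint : Integrable (fun x : ℝ =>
      ((Real.sqrt (2 * π))⁻¹ * Real.exp (c ^ 2 / 2)) * Real.exp (-(1/2) * (x - c) ^ 2)) := by
    exact ((integrable_exp_neg_mul_sq (by norm_num : (0:ℝ) < 1/2)).comp_sub_right c).const_mul _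
  have heq : (fun x : ℝ => (gaussianPDFReal 0 1 x).toNNReal • Real.exp (c * x))
      = fun x : ℝ => ((Real.sqrt (2 * π))⁻¹ * Real.exp (c ^ 2 / 2)) * Real.exp (-(1/2) * (x - c) ^ 2) :=
    funext fun x => by
      rw [NNReal.smul_def, Real.coe_toNNReal _ (gaussianPDFReal_nonneg 0 1 x), smul_eq_mul, hfun x]
  constructor
  · rw [hpdf, integrable_withDensity_iff_integrable_smul hmeas, heq]
    exact hint
  · rw [hpdf, integral_withDensity_eq_integral_smul hmeas, heq, integral_const_mul]
    have hshift : ∫ x : ℝ, Real.exp (-(1/2) * (x - c) ^ 2) = ∫ x : ℝ, Real.exp (-(1/2) * x ^ 2) :=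
      integral_sub_right_eq_self (fun x => Real.exp (-(1/2) * x ^ 2)) c
    rw [hshift, integral_gaussian]
    have h2π : Real.sqrt (2 * π) ≠ 0 := by
      positivity
    have h1 : Real.sqrt (π / (1/2)) = Real.sqrt (2 * π) := by
      ring_nf
    rw [h1]
    field_simp

lemma pi_exp_aux (n : ℕ) (c : Fin n → ℝ) :
    Integrable (fun x : Fin n → ℝ => Real.exp (∑ i, c i * x i))
      (Measure.pi fun _ => gaussianReal 0 1) ∧
    ∫ x : Fin n → ℝ, Real.exp (∑ i, c i * x i) ∂(Measure.pi fun _ => gaussianReal 0 1)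
      = Real.exp (∑ i, c i ^ 2 / 2) := by
  letI : MeasureSpace ℝ := ⟨gaussianReal 0 1⟩
  haveI : SigmaFinite (volume : Measure ℝ) := by
    show SigmaFinite (gaussianReal 0 1)
    infer_instance
  have h1 : ∀ i : Fin n, Integrable (fun x : ℝ => Real.exp (c i * x)) :=
    fun i => (gauss_exp_aux (c i)).1
  have hexp : (fun (x : Fin n → ℝ) => ∏ i, Real.exp (c i * x i))
      = fun x : Fin n → ℝ => Real.exp (∑ i, c i * x i) :=
    funext fun x => by rw [← Real.exp_sum]
  constructor
  · have h := MeasureTheory.Integrable.fintype_prod (𝕜 := ℝ)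
      (f := fun i (x : ℝ) => Real.exp (c i * x)) h1
    rw [hexp] at h
    exact h
  · have h := MeasureTheory.integral_fintype_prod_eq_prod (𝕜 := ℝ) (ι := Fin n) (μ := fun _ => gaussianReal 0 1)
      (f := fun i (x : ℝ) => Real.exp (c i * x))
    rw [hexp] at h
    have h2 : ∀ i : Fin n, (∫ x : ℝ, Real.exp (c i * x)) = Real.exp (c i ^ 2 / 2) :=
      fun i => (gauss_exp_aux (c i)).2
    calc ∫ x : Fin n → ℝ, Real.exp (∑ i, c i * x i) ∂(Measure.pi fun _ => gaussianReal 0 1)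
        = ∏ i, ∫ x : ℝ, Real.exp (c i * x) := h
      _ = ∏ i, Real.exp (c i ^ 2 / 2) := Finset.prod_congr rfl fun i _ => h2 i
      _ = Real.exp (∑ i, c i ^ 2 / 2) := (Real.exp_sum _ _).symm

noncomputable def cS {n : ℕ} (μ : ℝ) (S : Finset (Fin n)) (i : Fin n) : ℝ :=
  if i ∈ S then μ else 0

noncomputable def gS {n : ℕ} (μ : ℝ) (K : ℕ) (S : Finset (Fin n)) (x : Fin n → ℝ) : ℝ :=
  Real.exp (μ * (∑ i ∈ S, x i) - K * μ^2 / 2)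

lemma gS_eq {n : ℕ} (μ : ℝ) (K : ℕ) (S : Finset (Fin n)) (x : Fin n → ℝ) :
    gS μ K S x = Real.exp (-(K * μ^2 / 2)) * Real.exp (∑ i, cS μ S i * x i) := by
  rw [gS, ← Real.exp_add]
  congr 1
  have hsum : ∑ i, cS μ S i * x i = ∑ i ∈ S, μ * x i := by
    rw [Finset.sum_congr rfl (fun i _ => show cS μ S i * x i = if i ∈ S then μ * x i else 0 by
      by_cases h : i ∈ S <;> simp [cS, h])]
    rw [Finset.sum_ite_mem, Finset.univ_inter]
  rw [hsum, ← Finset.mul_sum]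
  ring

lemma cS_sq {n : ℕ} (μ : ℝ) (K : ℕ) (S : Finset (Fin n)) (hS : S.card = K) :
    ∑ i, cS μ S i ^ 2 / 2 = K * μ^2 / 2 := by
  have h : ∀ i : Fin n, cS μ S i ^ 2 / 2 = if i ∈ S then μ^2/2 else 0 := by
    intro i; by_cases h : i ∈ S <;> simp [cS, h]
  rw [Finset.sum_congr rfl fun i _ => h i, Finset.sum_ite_mem, Finset.univ_inter,
    Finset.sum_const, hS, nsmul_eq_mul]
  ring

lemma cS_cross {n : ℕ} (μ : ℝ) (K : ℕ) (S S' : Finset (Fin n))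
    (hS : S.card = K) (hS' : S'.card = K) :
    ∑ i, (cS μ S i + cS μ S' i) ^ 2 / 2 = K * μ^2 + μ^2 * ((S ∩ S').card : ℝ) := by
  have hterm : ∀ i : Fin n, (cS μ S i + cS μ S' i) ^ 2 / 2
      = cS μ S i ^ 2 / 2 + cS μ S' i ^ 2 / 2 + cS μ S i * cS μ S' i := by intro i; ring
  have hprod : ∀ i : Fin n, cS μ S i * cS μ S' i = if i ∈ S ∩ S' then μ^2 else 0 := by
    intro i
    by_cases h1 : i ∈ S <;> by_cases h2 : i ∈ S' <;>
      simp [cS, h1, h2, Finset.mem_inter] <;> ring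
  rw [Finset.sum_congr rfl fun i _ => hterm i, Finset.sum_add_distrib,
    Finset.sum_add_distrib, cS_sq μ K S hS, cS_sq μ K S' hS',
    Finset.sum_congr rfl fun i _ => hprod i, Finset.sum_ite_mem, Finset.univ_inter,
    Finset.sum_const, nsmul_eq_mul]
  ring

lemma gS_int {n : ℕ} (μ : ℝ) (K : ℕ) (S : Finset (Fin n)) :
    Integrable (gS μ K S) (Measure.pi fun _ : Fin n => gaussianReal 0 1) := by
  have := ((pi_exp_aux n (cS μ S)).1.const_mul (Real.exp (-(K * μ^2 / 2))))
  exact this.congr (ae_of_all _ fun x => (gS_eq μ K S x).symm)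

lemma gS_val {n : ℕ} (μ : ℝ) (K : ℕ) (S : Finset (Fin n)) (hS : S.card = K) :
    ∫ x, gS μ K S x ∂(Measure.pi fun _ : Fin n => gaussianReal 0 1) = 1 := by
  rw [integral_congr_ae (ae_of_all _ fun x => gS_eq μ K S x), integral_const_mul,
    (pi_exp_aux n (cS μ S)).2, cS_sq μ K S hS, ← Real.exp_add]
  simp

lemma gS_mul_eq {n : ℕ} (μ : ℝ) (K : ℕ) (S S' : Finset (Fin n)) (x : Fin n → ℝ) :
    gS μ K S x * gS μ K S' x
      = Real.exp (-(K * μ^2)) * Real.exp (∑ i, (cS μ S i + cS μ S' i) * x i) := by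
  rw [gS_eq μ K S x, gS_eq μ K S' x]
  rw [show ∑ i, (cS μ S i + cS μ S' i) * x i = (∑ i, cS μ S i * x i) + ∑ i, cS μ S' i * x i by
    rw [← Finset.sum_add_distrib]; exact Finset.sum_congr rfl fun i _ => by ring]
  rw [← Real.exp_add, ← Real.exp_add, ← Real.exp_add, ← Real.exp_add]
  congr 1
  ring

lemma gS_mul_int {n : ℕ} (μ : ℝ) (K : ℕ) (S S' : Finset (Fin n)) :
    Integrable (fun x => gS μ K S x * gS μ K S' x)
      (Measure.pi fun _ : Fin n => gaussianReal 0 1) := by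
  have := ((pi_exp_aux n (fun i => cS μ S i + cS μ S' i)).1.const_mul (Real.exp (-(K * μ^2))))
  exact this.congr (ae_of_all _ fun x => (gS_mul_eq μ K S S' x).symm)

lemma gS_mul_val {n : ℕ} (μ : ℝ) (K : ℕ) (S S' : Finset (Fin n))
    (hS : S.card = K) (hS' : S'.card = K) :
    ∫ x, gS μ K S x * gS μ K S' x ∂(Measure.pi fun _ : Fin n => gaussianReal 0 1)
      = Real.exp (μ^2 * ((S ∩ S').card : ℝ)) := by
  rw [integral_congr_ae (ae_of_all _ fun x => gS_mul_eq μ K S S' x), integral_const_mul,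
    (pi_exp_aux n (fun i => cS μ S i + cS μ S' i)).2, cS_cross μ K S S' hS hS',
    ← Real.exp_add]
  congr 1
  ring

/-- For a symmetric class `C` of `K`-subsets of `{1,...,n}`
(the conditional law of the overlap `Z = |S ∩ S'|` given `S'` does not depend
on `S'`, and each coordinate of a fixed member is covered with probability
`K/n`), one has `E[exp(μ²Z)] ≤ (exp(μ²K) - 1)·K/n + 1`; consequently for
`δ ∈ (0,1)` the Bayes risk satisfies `R* ≥ δ` whenever
`μ ≤ √((1/K)·log(1 + 4n(1-δ)²/K))`. -/
theorem stmt4 (n K : ℕ) (hn : 0 < n) (hK : 0 < K) (μ δ : ℝ) (hμ : 0 < μ)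
    (hδ : δ ∈ Set.Ioo (0:ℝ) 1)
    (C : Finset (Finset (Fin n))) (hC : C.Nonempty) (hcard : ∀ S ∈ C, S.card = K)
    -- (i) the conditional distribution of Z = |S ∩ S'| given S' is the same for all S'
    (hsym : ∀ S₁ ∈ C, ∀ S₂ ∈ C, ∀ j : ℕ,
      (C.filter fun S => (S ∩ S₁).card = j).card
        = (C.filter fun S => (S ∩ S₂).card = j).card)
    -- (ii) for any fixed S₀ ∈ C and i ∈ S₀, P{i ∈ S} = K/n
    (hmarg : ∀ S₀ ∈ C, ∀ i ∈ S₀,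
      ((C.filter fun S => i ∈ S).card : ℝ) / C.card = (K : ℝ) / n)
    (EZ : ℝ)
    (hEZ : EZ = (1 / (C.card : ℝ)^2) *
      ∑ S ∈ C, ∑ S' ∈ C, Real.exp (μ^2 * ((S ∩ S').card : ℝ)))
    (P₀ : Measure (Fin n → ℝ))
    (hP₀ : P₀ = Measure.pi fun _ : Fin n => gaussianReal 0 1)
    (L : (Fin n → ℝ) → ℝ)
    (hL : ∀ x, L x = (1 / (C.card : ℝ)) *
      ∑ S ∈ C, Real.exp (μ * (∑ i ∈ S, x i) - K * μ^2 / 2)) :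
    EZ ≤ (Real.exp (μ^2 * K) - 1) * K / n + 1 ∧
    (μ ≤ Real.sqrt ((1 / K) * Real.log (1 + 4 * n * (1 - δ)^2 / K)) →
      δ ≤ 1 - (1/2) * ∫ x, |L x - 1| ∂P₀) := by
  have hpart1 : EZ ≤ (Real.exp (μ^2 * K) - 1) * K / n + 1 := by
    obtain ⟨S₀, hS₀⟩ := hC
    have hm : (0:ℝ) < C.card := by
      exact_mod_cast Finset.card_pos.mpr ⟨S₀, hS₀⟩
    have hKr : (0:ℝ) < K := by exact_mod_cast hK
    -- symmetry: the inner sum does not depend on the fixed set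
    have key : ∀ S₁ ∈ C, ∀ S₂ ∈ C,
        ∑ S ∈ C, Real.exp (μ^2 * ((S ∩ S₁).card : ℝ))
          = ∑ S ∈ C, Real.exp (μ^2 * ((S ∩ S₂).card : ℝ)) := by
      intro S₁ h₁ S₂ h₂
      have maps : ∀ T : Finset (Fin n), ∀ S ∈ C, (S ∩ T).card ∈ Finset.range (n+1) := by
        intro T S hS
        rw [Finset.mem_range, Nat.lt_succ_iff]
        calc (S ∩ T).card ≤ Fintype.card (Fin n) := Finset.card_le_univ _
          _ = n := Fintype.card_fin n
      have inner : ∀ T ∈ C, ∑ S ∈ C, Real.exp (μ^2 * ((S ∩ T).card : ℝ))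
          = ∑ j ∈ Finset.range (n+1),
              ((C.filter fun S => (S ∩ T).card = j).card : ℝ) * Real.exp (μ^2 * j) := by
        intro T hT
        rw [← Finset.sum_fiberwise_of_maps_to (maps T)
          (fun S => Real.exp (μ^2 * ((S ∩ T).card : ℝ)))]
        refine Finset.sum_congr rfl fun j _ => ?_
        have : ∀ S ∈ C.filter fun S => (S ∩ T).card = j,
            Real.exp (μ^2 * ((S ∩ T).card : ℝ)) = Real.exp (μ^2 * j) := by
          intro S hS
          rw [(Finset.mem_filter.mp hS).2]
        rw [Finset.sum_congr rfl this, Finset.sum_const, nsmul_eq_mul]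
      rw [inner S₁ h₁, inner S₂ h₂]
      exact Finset.sum_congr rfl fun j _ => by rw [hsym S₁ h₁ S₂ h₂ j]
    -- reduce the double sum to a single sum against S₀
    have hEZT : EZ = (1 / (C.card : ℝ)) * ∑ S' ∈ C, Real.exp (μ^2 * ((S' ∩ S₀).card : ℝ)) := by
      rw [hEZ]
      have hswap : ∀ S ∈ C, ∑ S' ∈ C, Real.exp (μ^2 * ((S ∩ S').card : ℝ))
          = ∑ S' ∈ C, Real.exp (μ^2 * ((S' ∩ S₀).card : ℝ)) := by
        intro S hS
        calc ∑ S' ∈ C, Real.exp (μ^2 * ((S ∩ S').card : ℝ))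
            = ∑ S' ∈ C, Real.exp (μ^2 * ((S' ∩ S).card : ℝ)) :=
              Finset.sum_congr rfl fun S' _ => by rw [Finset.inter_comm]
          _ = ∑ S' ∈ C, Real.exp (μ^2 * ((S' ∩ S₀).card : ℝ)) := key S hS S₀ hS₀
      rw [Finset.sum_congr rfl hswap, Finset.sum_const, nsmul_eq_mul]
      field_simp
    -- Jensen: pointwise bound
    have hJ : ∀ S' ∈ C, Real.exp (μ^2 * ((S' ∩ S₀).card : ℝ))
        ≤ ∑ i ∈ S₀, (K:ℝ)⁻¹ * Real.exp ((K:ℝ) * μ^2 * (if i ∈ S' then (1:ℝ) else 0)) := by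
      intro S' hS'
      have hcS : ((S' ∩ S₀).card : ℝ) = ∑ i ∈ S₀, (if i ∈ S' then (1:ℝ) else 0) := by
        have : S' ∩ S₀ = S₀.filter fun i => i ∈ S' := by
          ext i; simp [Finset.mem_inter, Finset.mem_filter, and_comm]
        rw [this]
        exact (Finset.sum_boole _ _).symm
      have h₁ : ∑ _i ∈ S₀, (K:ℝ)⁻¹ = 1 := by
        rw [Finset.sum_const, hcard S₀ hS₀, nsmul_eq_mul]
        field_simp
      have hjen := convexOn_exp.map_sum_le (t := S₀) (w := fun _ => (K:ℝ)⁻¹)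
        (p := fun i => (K:ℝ) * μ^2 * (if i ∈ S' then (1:ℝ) else 0))
        (fun i _ => by positivity) h₁ (fun i _ => Set.mem_univ _)
      have harg : ∑ i ∈ S₀, (K:ℝ)⁻¹ • ((K:ℝ) * μ^2 * (if i ∈ S' then (1:ℝ) else 0))
          = μ^2 * ((S' ∩ S₀).card : ℝ) := by
        rw [hcS, Finset.mul_sum]
        refine Finset.sum_congr rfl fun i _ => ?_
        rw [smul_eq_mul]
        field_simp
      rw [harg] at hjen
      refine hjen.trans_eq ?_
      exact Finset.sum_congr rfl fun i _ => by rw [smul_eq_mul]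
    -- sum the bound
    have hmargsum : ∀ i ∈ S₀,
        (1 / (C.card : ℝ)) * ∑ S' ∈ C, Real.exp ((K:ℝ) * μ^2 * (if i ∈ S' then (1:ℝ) else 0))
          = (Real.exp (μ^2 * K) - 1) * K / n + 1 := by
      intro i hi
      have hterm : ∀ S' : Finset (Fin n),
          Real.exp ((K:ℝ) * μ^2 * (if i ∈ S' then (1:ℝ) else 0))
            = (Real.exp (μ^2 * K) - 1) * (if i ∈ S' then (1:ℝ) else 0) + 1 := by
        intro S'
        split_ifs with h
        · rw [mul_one, mul_one, mul_comm ((K:ℝ)) (μ^2)]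
          ring
        · simp
      rw [Finset.sum_congr rfl fun S' _ => hterm S', Finset.sum_add_distrib,
        ← Finset.mul_sum, Finset.sum_boole, Finset.sum_const, nsmul_eq_mul, mul_one]
      have := hmarg S₀ hS₀ i hi
      have hcount : ((C.filter fun S => i ∈ S).card : ℝ) = (K:ℝ)/n * C.card := by
        rw [← this]; field_simp
      rw [hcount]
      field_simp
    calc EZ = (1 / (C.card : ℝ)) * ∑ S' ∈ C, Real.exp (μ^2 * ((S' ∩ S₀).card : ℝ)) := hEZT
      _ ≤ (1 / (C.card : ℝ)) * ∑ S' ∈ C, ∑ i ∈ S₀,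
            (K:ℝ)⁻¹ * Real.exp ((K:ℝ) * μ^2 * (if i ∈ S' then (1:ℝ) else 0)) := by
          apply mul_le_mul_of_nonneg_left (Finset.sum_le_sum hJ)
          positivity
      _ = ∑ i ∈ S₀, (K:ℝ)⁻¹ * ((1 / (C.card : ℝ)) *
            ∑ S' ∈ C, Real.exp ((K:ℝ) * μ^2 * (if i ∈ S' then (1:ℝ) else 0))) := by
          rw [Finset.sum_comm, Finset.mul_sum]
          refine Finset.sum_congr rfl fun i _ => ?_
          rw [Finset.mul_sum, Finset.mul_sum, Finset.mul_sum]
          refine Finset.sum_congr rfl fun S' _ => ?_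
          ring
      _ = ∑ i ∈ S₀, (K:ℝ)⁻¹ * ((Real.exp (μ^2 * K) - 1) * K / n + 1) :=
          Finset.sum_congr rfl fun i hi => by rw [hmargsum i hi]
      _ = (Real.exp (μ^2 * K) - 1) * K / n + 1 := by
          rw [Finset.sum_const, hcard S₀ hS₀, nsmul_eq_mul]
          field_simp
  refine ⟨hpart1, fun hμle => ?_⟩
  subst hP₀
  obtain ⟨hδ0, hδ1⟩ := hδ
  have hm : (0:ℝ) < C.card := by exact_mod_cast Finset.card_pos.mpr hC
  have hKr : (0:ℝ) < K := by exact_mod_cast hK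
  have hnr : (0:ℝ) < n := by exact_mod_cast hn
  have hLF : L = fun x => (1 / (C.card : ℝ)) * ∑ S ∈ C, gS μ K S x :=
    funext fun x => by rw [hL x]; rfl
  -- integral facts about L
  have hFInt : Integrable L (Measure.pi fun _ : Fin n => gaussianReal 0 1) := by
    rw [hLF]
    exact (integrable_finset_sum C fun S _ => gS_int μ K S).const_mul _
  have hFVal : ∫ x, L x ∂(Measure.pi fun _ : Fin n => gaussianReal 0 1) = 1 := by
    rw [hLF]
    rw [integral_const_mul, integral_finset_sum C fun S _ => gS_int μ K S,
      Finset.sum_congr rfl (fun S hS => gS_val μ K S (hcard S hS)),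
      Finset.sum_const, nsmul_eq_mul, mul_one]
    field_simp
  have hF2eq : (fun x => (L x)^2)
      = fun x => (1 / (C.card : ℝ)^2) * ∑ S ∈ C, ∑ S' ∈ C, gS μ K S x * gS μ K S' x := by
    funext x
    rw [hLF]
    simp only
    rw [mul_pow, sq ((∑ S ∈ C, gS μ K S x)), Finset.sum_mul_sum]
    ring_nf
  have hF2Int : Integrable (fun x => (L x)^2)
      (Measure.pi fun _ : Fin n => gaussianReal 0 1) := by
    rw [hF2eq]
    exact (integrable_finset_sum C fun S _ =>
      integrable_finset_sum C fun S' _ => gS_mul_int μ K S S').const_mul _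
  have hF2Val : ∫ x, (L x)^2 ∂(Measure.pi fun _ : Fin n => gaussianReal 0 1) = EZ := by
    rw [hF2eq]
    rw [integral_const_mul, integral_finset_sum C fun S _ =>
      integrable_finset_sum C fun S' _ => gS_mul_int μ K S S',
      Finset.sum_congr rfl fun S hS => integral_finset_sum C fun S' _ => gS_mul_int μ K S S',
      hEZ]
    congr 1
    exact Finset.sum_congr rfl fun S hS => Finset.sum_congr rfl fun S' hS' =>
      gS_mul_val μ K S S' (hcard S hS) (hcard S' hS')
  -- (L-1)^2
  have hsubeq : (fun x => (L x - 1)^2) = fun x => (L x)^2 - 2 * L x + 1 :=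
    funext fun x => by ring
  have hsubInt : Integrable (fun x => (L x - 1)^2)
      (Measure.pi fun _ : Fin n => gaussianReal 0 1) := by
    rw [hsubeq]
    exact (hF2Int.sub (hFInt.const_mul 2)).add (integrable_const 1)
  have hsubVal : ∫ x, (L x - 1)^2 ∂(Measure.pi fun _ : Fin n => gaussianReal 0 1)
      = EZ - 1 := by
    rw [hsubeq]
    have i1 : Integrable (fun x => L x^2 - 2 * L x)
        (Measure.pi fun _ : Fin n => gaussianReal 0 1) := hF2Int.sub (hFInt.const_mul 2)
    rw [integral_add i1 (integrable_const 1),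
      integral_sub hF2Int (hFInt.const_mul 2), integral_const_mul, hF2Val, hFVal,
      integral_const, probReal_univ]
    simp
    ring
  -- measurability
  have hFmeas : Measurable L := by
    rw [hLF]
    apply Measurable.const_mul
    apply Finset.measurable_sum
    intro S _
    exact Real.measurable_exp.comp
      (((Finset.measurable_sum S fun i _ => measurable_pi_apply i).const_mul μ).sub_const _)
  -- Cauchy-Schwarz
  have hmem2 : MemLp (fun x => L x - 1) (ENNReal.ofReal 2)
      (Measure.pi fun _ : Fin n => gaussianReal 0 1) := by
    rw [show ENNReal.ofReal 2 = 2 by norm_num]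
    exact (memLp_two_iff_integrable_sq
      ((hFmeas.sub measurable_const).aestronglyMeasurable)).2 hsubInt
  have hmemabs : MemLp (fun x => |L x - 1|) (ENNReal.ofReal 2)
      (Measure.pi fun _ : Fin n => gaussianReal 0 1) := by
    have := hmem2.norm
    simpa [Real.norm_eq_abs] using this
  have hmem1 : MemLp (fun _ : Fin n → ℝ => (1:ℝ)) (ENNReal.ofReal 2)
      (Measure.pi fun _ : Fin n => gaussianReal 0 1) := memLp_const 1
  have hconj : Real.HolderConjugate 2 2 := Real.HolderConjugate.two_two
  have hCS := integral_mul_le_Lp_mul_Lq_of_nonneg hconj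
    (μ := Measure.pi fun _ : Fin n => gaussianReal 0 1)
    (f := fun x => |L x - 1|) (g := fun _ => (1:ℝ))
    (ae_of_all _ fun x => abs_nonneg _) (ae_of_all _ fun _ => zero_le_one) hmemabs hmem1
  have habs2 : ∀ a : ℝ, |a| ^ (2:ℝ) = a^2 := fun a => by
    rw [show (2:ℝ) = ((2:ℕ):ℝ) by norm_num, Real.rpow_natCast, sq_abs]
  rw [show (fun x : Fin n → ℝ => |L x - 1| * 1) = fun x => |L x - 1| by funext x; rw [mul_one]]
    at hCS
  have hint1 : ∫ x : Fin n → ℝ, (1:ℝ)^(2:ℝ) ∂(Measure.pi fun _ : Fin n => gaussianReal 0 1)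
      = 1 := by
    simp
  have hint2 : ∫ x, |L x - 1| ^ (2:ℝ) ∂(Measure.pi fun _ : Fin n => gaussianReal 0 1)
      = EZ - 1 := by
    rw [← hsubVal]
    exact integral_congr_ae (ae_of_all _ fun x => habs2 _)
  rw [hint1, hint2] at hCS
  rw [Real.one_rpow, mul_one] at hCS
  -- bound EZ - 1
  have ha : 0 ≤ (1/(K:ℝ)) * Real.log (1 + 4 * n * (1 - δ)^2 / K) := by
    apply mul_nonneg (by positivity)
    apply Real.log_nonneg
    have : 0 ≤ 4 * (n:ℝ) * (1 - δ)^2 / K := by positivity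
    linarith
  have hμ2 : μ^2 ≤ (1/(K:ℝ)) * Real.log (1 + 4 * n * (1 - δ)^2 / K) := by
    calc μ^2 = μ * μ := sq μ
      _ ≤ Real.sqrt ((1/(K:ℝ)) * Real.log (1 + 4 * n * (1 - δ)^2 / K))
          * Real.sqrt ((1/(K:ℝ)) * Real.log (1 + 4 * n * (1 - δ)^2 / K)) :=
        mul_le_mul hμle hμle hμ.le (Real.sqrt_nonneg _)
      _ = _ := Real.mul_self_sqrt ha
  have hexpb : Real.exp (μ^2 * K) ≤ 1 + 4 * n * (1 - δ)^2 / K := by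
    have hlog : μ^2 * K ≤ Real.log (1 + 4 * n * (1 - δ)^2 / K) := by
      have := mul_le_mul_of_nonneg_right hμ2 hKr.le
      calc μ^2 * K ≤ (1/(K:ℝ)) * Real.log (1 + 4 * n * (1 - δ)^2 / K) * K := this
        _ = Real.log (1 + 4 * n * (1 - δ)^2 / K) := by field_simp
    have hpos : (0:ℝ) < 1 + 4 * n * (1 - δ)^2 / K := by
      have : 0 ≤ 4 * (n:ℝ) * (1 - δ)^2 / K := by positivity
      linarith
    calc Real.exp (μ^2 * K) ≤ Real.exp (Real.log (1 + 4 * n * (1 - δ)^2 / K)) :=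
        Real.exp_le_exp.2 hlog
      _ = 1 + 4 * n * (1 - δ)^2 / K := Real.exp_log hpos
  have hEZb : EZ - 1 ≤ (2 * (1 - δ))^2 := by
    have h1 : EZ - 1 ≤ (Real.exp (μ^2 * K) - 1) * K / n := by linarith
    have h2 : (Real.exp (μ^2 * K) - 1) * K / n ≤ (4 * n * (1 - δ)^2 / K) * K / n := by
      gcongr
      linarith
    have h3 : (4 * (n:ℝ) * (1 - δ)^2 / K) * K / n = (2 * (1 - δ))^2 := by
      field_simp
      ring
    linarith
  -- conclude
  have hfinal : ∫ x, |L x - 1| ∂(Measure.pi fun _ : Fin n => gaussianReal 0 1)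
      ≤ 2 * (1 - δ) := by
    calc ∫ x, |L x - 1| ∂(Measure.pi fun _ : Fin n => gaussianReal 0 1)
        ≤ (EZ - 1) ^ (1/(2:ℝ)) := hCS
      _ = Real.sqrt (EZ - 1) := by rw [← Real.sqrt_eq_rpow]
      _ ≤ Real.sqrt ((2 * (1 - δ))^2) := Real.sqrt_le_sqrt hEZb
      _ = 2 * (1 - δ) := Real.sqrt_sq (by linarith)
  linarith
end

section
/- Let C be a family of K-subsets of {1,...,n}, let A ⊆ C be a t-cover of C in the metric d(S,T) = √(|S△T|) (i.e., every S ∈ C is within distance t of some π(S) ∈ A), and let X be standard Gaussian on ℝⁿ. Then M_C(μ) := E₀[(1/μ)·log((1/N)∑_{S∈C}exp(μX_S))] ≤ μt²/2 + E₀[max_{S∈A} X_S]. -/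
open MeasureTheory Real Finset ProbabilityTheory

open scoped ENNReal NNReal

lemma exp_mul_gaussianPDFReal (c x : ℝ) :
    rexp (c * x) * gaussianPDFReal 0 1 x = rexp (c ^ 2 / 2) * gaussianPDFReal c 1 x := by
  simp only [gaussianPDFReal, NNReal.coe_one, mul_one, sub_zero]
  rw [mul_left_comm, mul_left_comm (rexp (c ^ 2 / 2)), ← Real.exp_add, ← Real.exp_add]
  congr 2
  ring

lemma gaussianReal_eq' : gaussianReal 0 1
    = MeasureTheory.volume.withDensity
      (fun x => ((Real.toNNReal (gaussianPDFReal 0 1 x)) : ℝ≥0∞)) := by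
  rw [gaussianReal_of_var_ne_zero 0 one_ne_zero]; rfl

lemma integrable_exp_gauss (c : ℝ) :
    Integrable (fun y => rexp (c * y)) (gaussianReal 0 1) := by
  rw [gaussianReal_eq', integrable_withDensity_iff_integrable_smul
    ((measurable_gaussianPDFReal 0 1).real_toNNReal)]
  refine ((integrable_gaussianPDFReal c 1).const_mul (rexp (c ^ 2 / 2))).congr
    (Filter.Eventually.of_forall fun x => ?_)
  show rexp (c ^ 2 / 2) * gaussianPDFReal c 1 x
      = (Real.toNNReal (gaussianPDFReal 0 1 x)) • rexp (c * x)
  rw [NNReal.smul_def, smul_eq_mul, Real.coe_toNNReal _ (gaussianPDFReal_nonneg 0 1 x),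
    mul_comm (gaussianPDFReal 0 1 x)]
  exact (exp_mul_gaussianPDFReal c x).symm

lemma integral_exp_gauss (c : ℝ) :
    ∫ y, rexp (c * y) ∂(gaussianReal 0 1) = rexp (c ^ 2 / 2) := by
  rw [gaussianReal_eq', integral_withDensity_eq_integral_smul
    ((measurable_gaussianPDFReal 0 1).real_toNNReal)]
  have : ∀ x : ℝ, (Real.toNNReal (gaussianPDFReal 0 1 x)) • rexp (c * x)
      = rexp (c ^ 2 / 2) * gaussianPDFReal c 1 x := by
    intro x
    rw [NNReal.smul_def, smul_eq_mul, Real.coe_toNNReal _ (gaussianPDFReal_nonneg 0 1 x),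
      mul_comm, exp_mul_gaussianPDFReal]
  simp_rw [this]
  rw [MeasureTheory.integral_const_mul, integral_gaussianPDFReal_eq_one c one_ne_zero, mul_one]

lemma integrable_exp_pi (n : ℕ) (c : Fin n → ℝ) :
    Integrable (fun x : Fin n → ℝ => rexp (∑ i, c i * x i))
      (Measure.pi fun _ => gaussianReal 0 1) := by
  letI : MeasureSpace ℝ := ⟨gaussianReal 0 1⟩
  haveI : SigmaFinite (MeasureTheory.volume : Measure ℝ) :=
    inferInstanceAs (SigmaFinite (gaussianReal 0 1))
  have h : (Measure.pi fun _ : Fin n => gaussianReal 0 1)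
      = (MeasureTheory.volume : Measure (Fin n → ℝ)) := rfl
  rw [h]
  refine (Integrable.fintype_prod (f := fun i (y : ℝ) => rexp (c i * y))
    (fun i => integrable_exp_gauss (c i))).congr
    (Filter.Eventually.of_forall fun x => ?_)
  exact (Real.exp_sum Finset.univ fun i => c i * x i).symm

lemma integral_exp_pi (n : ℕ) (c : Fin n → ℝ) :
    ∫ x : Fin n → ℝ, rexp (∑ i, c i * x i) ∂(Measure.pi fun _ => gaussianReal 0 1)
      = rexp (∑ i, c i ^ 2 / 2) := by
  letI : MeasureSpace ℝ := ⟨gaussianReal 0 1⟩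
  haveI : SigmaFinite (MeasureTheory.volume : Measure ℝ) :=
    inferInstanceAs (SigmaFinite (gaussianReal 0 1))
  have h : (Measure.pi fun _ : Fin n => gaussianReal 0 1)
      = (MeasureTheory.volume : Measure (Fin n → ℝ)) := rfl
  rw [h]
  calc ∫ x : Fin n → ℝ, rexp (∑ i, c i * x i)
      = ∫ x : Fin n → ℝ, ∏ i, rexp (c i * x i) := by
        simp_rw [Real.exp_sum]
    _ = ∏ i, ∫ y : ℝ, rexp (c i * y) :=
        MeasureTheory.integral_fintype_prod_eq_prod (fun i (y : ℝ) => rexp (c i * y))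
    _ = ∏ i, rexp (c i ^ 2 / 2) := by
        refine Finset.prod_congr rfl fun i _ => ?_
        exact integral_exp_gauss (c i)
    _ = rexp (∑ i, c i ^ 2 / 2) := (Real.exp_sum _ _).symm

lemma integrable_finset_sup' {α β : Type*} [MeasurableSpace α] {m : Measure α}
    {A : Finset β} (hA : A.Nonempty) {f : β → α → ℝ}
    (hf : ∀ b ∈ A, Integrable (f b) m) :
    Integrable (fun x => A.sup' hA fun b => f b x) m := by
  induction hA using Finset.Nonempty.cons_induction with
  | singleton b => simpa using hf b (by simp)
  | cons b s hbs hs ih =>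
    have : (fun x => (Finset.cons b s hbs).sup' (Finset.cons_nonempty hbs) fun c => f c x)
        = fun x => f b x ⊔ s.sup' hs fun c => f c x := by
      funext x; rw [Finset.sup'_cons hs]
    rw [this]
    exact (hf b (by simp)).sup (ih fun c hc => hf c (by simp [hc]))

lemma sum_ind_mul {n : ℕ} (S : Finset (Fin n)) (x : Fin n → ℝ) :
    ∑ i, (if i ∈ S then (1:ℝ) else 0) * x i = ∑ i ∈ S, x i := by
  simp [ite_mul, Finset.sum_ite_mem]

lemma sum_ind_sq {n : ℕ} (S T : Finset (Fin n)) :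
    ∑ i, ((if i ∈ S then (1:ℝ) else 0) - (if i ∈ T then 1 else 0)) ^ 2
      = (((S \ T) ∪ (T \ S)).card : ℝ) := by
  have h : ∀ i, ((if i ∈ S then (1:ℝ) else 0) - (if i ∈ T then 1 else 0)) ^ 2
      = if i ∈ (S \ T) ∪ (T \ S) then (1:ℝ) else 0 := by
    intro i
    by_cases hS : i ∈ S <;> by_cases hT : i ∈ T <;> simp [hS, hT]
  simp only [h, Finset.sum_ite_mem, Finset.univ_inter, Finset.sum_const, nsmul_eq_mul, mul_one]

set_option maxHeartbeats 1000000 in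
/-- If `A ⊆ C` is a `t`-cover of `C` in the metric
`d(S,T) = √|S △ T|`, then
`M_C(μ) = E₀[(1/μ)·log((1/N)∑_{S∈C} exp(μ X_S))] ≤ μt²/2 + E₀[max_{S∈A} X_S]`. -/
theorem stmt18 (n K : ℕ) (μ t : ℝ) (hμ : 0 < μ) (ht : 0 ≤ t)
    (C A : Finset (Finset (Fin n))) (hC : C.Nonempty) (hA : A.Nonempty)
    (hAC : A ⊆ C) (hcard : ∀ S ∈ C, S.card = K)
    -- A is a t-cover of C: every S ∈ C is within distance t of some member of A
    (hcover : ∀ S ∈ C, ∃ T ∈ A, (((S \ T) ∪ (T \ S)).card : ℝ) ≤ t^2)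
    (P₀ : Measure (Fin n → ℝ))
    (hP₀ : P₀ = Measure.pi fun _ : Fin n => gaussianReal 0 1) :
    (∫ x, (1/μ) * Real.log ((1 / (C.card : ℝ)) *
        ∑ S ∈ C, Real.exp (μ * ∑ i ∈ S, x i)) ∂P₀)
      ≤ μ * t^2 / 2 + ∫ x, A.sup' hA (fun T => ∑ i ∈ T, x i) ∂P₀ := by
  subst hP₀
  set P : Measure (Fin n → ℝ) := Measure.pi fun _ : Fin n => gaussianReal 0 1 with hP
  haveI hPP : IsProbabilityMeasure P := by rw [hP]; infer_instance
  clear_value P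
  have hN1 : (1:ℝ) ≤ (C.card : ℝ) := by exact_mod_cast hC.card_pos
  have hNpos : (0:ℝ) < (C.card : ℝ) := lt_of_lt_of_le one_pos hN1
  choose pr hprA hprd using hcover
  -- integrability of exponentials of linear forms
  have hexpint : ∀ c : Fin n → ℝ,
      Integrable (fun x : Fin n → ℝ => rexp (∑ i, c i * x i)) P := by
    intro c; rw [hP]; exact integrable_exp_pi n c
  have hexpval : ∀ c : Fin n → ℝ,
      ∫ x, rexp (∑ i, c i * x i) ∂P = rexp (∑ i, c i ^ 2 / 2) := by
    intro c; rw [hP]; exact integral_exp_pi n c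
  -- measurability and integrability of X S
  have hXmeas : ∀ S : Finset (Fin n), Measurable (fun x : Fin n → ℝ => ∑ i ∈ S, x i) :=
    fun S => Finset.measurable_sum S fun i _ => measurable_pi_apply i
  have hXint : ∀ S : Finset (Fin n), Integrable (fun x : Fin n → ℝ => ∑ i ∈ S, x i) P := by
    intro S
    have h1 := hexpint (fun i => if i ∈ S then (1:ℝ) else 0)
    have h2 := hexpint (fun i => -(if i ∈ S then (1:ℝ) else 0))
    refine (h1.add h2).mono' (hXmeas S).aestronglyMeasurable
      (Filter.Eventually.of_forall fun x => ?_)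
    have e1 : ∑ i, (if i ∈ S then (1:ℝ) else 0) * x i = ∑ i ∈ S, x i := sum_ind_mul S x
    have e2 : ∑ i, -(if i ∈ S then (1:ℝ) else 0) * x i = -∑ i ∈ S, x i := by
      have h0 : ∀ i ∈ Finset.univ, -(if i ∈ S then (1:ℝ) else 0) * x i
          = -((if i ∈ S then (1:ℝ) else 0) * x i) := fun i _ => by ring
      rw [Finset.sum_congr rfl h0, Finset.sum_neg_distrib, e1]
    simp only [Pi.add_apply]
    rw [e1, e2, Real.norm_eq_abs]
    have p1 := Real.add_one_le_exp (∑ i ∈ S, x i)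
    have p2 := Real.add_one_le_exp (-∑ i ∈ S, x i)
    have p3 := Real.exp_pos (∑ i ∈ S, x i)
    have p4 := Real.exp_pos (-∑ i ∈ S, x i)
    rw [abs_le]
    constructor <;> linarith
  -- coefficient functions for the pairs (S, pr S)
  set cf : {S // S ∈ C} → Fin n → ℝ := fun s i =>
    μ * ((if i ∈ s.1 then (1:ℝ) else 0) - (if i ∈ pr s.1 s.2 then 1 else 0)) with hcf
  have hcfsum : ∀ (s : {S // S ∈ C}) (x : Fin n → ℝ),
      ∑ i, cf s i * x i = μ * ((∑ i ∈ s.1, x i) - ∑ i ∈ pr s.1 s.2, x i) := by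
    intro s x
    have h0 : ∀ i ∈ Finset.univ, cf s i * x i
        = μ * ((if i ∈ s.1 then (1:ℝ) else 0) * x i
          - (if i ∈ pr s.1 s.2 then (1:ℝ) else 0) * x i) :=
      fun i _ => by rw [hcf]; ring
    rw [Finset.sum_congr rfl h0, ← Finset.mul_sum, Finset.sum_sub_distrib,
      sum_ind_mul, sum_ind_mul]
  have hcfsq : ∀ s : {S // S ∈ C}, ∑ i, (cf s i) ^ 2 / 2 ≤ μ ^ 2 * t ^ 2 / 2 := by
    intro s
    have h0 : ∀ i ∈ Finset.univ, (cf s i) ^ 2 / 2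
        = μ ^ 2 / 2 * ((if i ∈ s.1 then (1:ℝ) else 0)
          - (if i ∈ pr s.1 s.2 then 1 else 0)) ^ 2 :=
      fun i _ => by rw [hcf]; ring
    rw [Finset.sum_congr rfl h0, ← Finset.mul_sum, sum_ind_sq]
    have h1 := hprd s.1 s.2
    nlinarith [sq_nonneg μ]
  clear_value cf
  -- the comparison process Z
  set Zf : (Fin n → ℝ) → ℝ :=
    fun x => (1 / (C.card : ℝ)) * ∑ s ∈ C.attach, rexp (∑ i, cf s i * x i) with hZf
  have hZint : Integrable Zf P := by
    rw [hZf]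
    exact (integrable_finset_sum _ fun s _ => hexpint (cf s)).const_mul _
  have hZpos : ∀ x, 0 < Zf x := by
    intro x
    simp only [hZf]
    apply mul_pos (by positivity)
    exact Finset.sum_pos (fun s _ => Real.exp_pos _) (Finset.attach_nonempty_iff.2 hC)
  have hZval : ∫ x, Zf x ∂P
      = (1 / (C.card : ℝ)) * ∑ s ∈ C.attach, rexp (∑ i, (cf s i) ^ 2 / 2) := by
    simp only [hZf]
    rw [MeasureTheory.integral_const_mul,
      MeasureTheory.integral_finset_sum _ fun s _ => hexpint (cf s)]
    congr 1
    exact Finset.sum_congr rfl fun s _ => hexpval (cf s)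
  clear_value Zf
  set I : ℝ := ∫ x, Zf x ∂P with hIdef
  clear_value I
  have hIval : I = (1 / (C.card : ℝ)) * ∑ s ∈ C.attach, rexp (∑ i, (cf s i) ^ 2 / 2) :=
    hZval
  have hIpos : 0 < I := by
    rw [hIval]
    apply mul_pos (by positivity)
    exact Finset.sum_pos (fun s _ => Real.exp_pos _) (Finset.attach_nonempty_iff.2 hC)
  have hIle : I ≤ rexp (μ ^ 2 * t ^ 2 / 2) := by
    rw [hIval]
    have h1 : ∑ s ∈ C.attach, rexp (∑ i, (cf s i) ^ 2 / 2)
        ≤ ∑ _s ∈ C.attach, rexp (μ ^ 2 * t ^ 2 / 2) :=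
      Finset.sum_le_sum fun s _ => Real.exp_le_exp.2 (hcfsq s)
    have h2 : (∑ _s ∈ C.attach, rexp (μ ^ 2 * t ^ 2 / 2))
        = (C.card : ℝ) * rexp (μ ^ 2 * t ^ 2 / 2) := by
      rw [Finset.sum_const, Finset.card_attach, nsmul_eq_mul]
    calc (1 / (C.card : ℝ)) * ∑ s ∈ C.attach, rexp (∑ i, (cf s i) ^ 2 / 2)
        ≤ (1 / (C.card : ℝ)) * ((C.card : ℝ) * rexp (μ ^ 2 * t ^ 2 / 2)) := by
          rw [← h2]; exact mul_le_mul_of_nonneg_left h1 (by positivity)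
      _ = rexp (μ ^ 2 * t ^ 2 / 2) := by field_simp
  -- the max process
  set Mf : (Fin n → ℝ) → ℝ := fun x => A.sup' hA fun T => ∑ i ∈ T, x i with hMf
  have hMint : Integrable Mf P := by
    rw [hMf]
    exact integrable_finset_sup' hA fun T _ => hXint T
  have hMle : ∀ (x : Fin n → ℝ) (s : {S // S ∈ C}),
      (∑ i ∈ pr s.1 s.2, x i) ≤ Mf x := by
    intro x s
    simp only [hMf]
    exact Finset.le_sup' (fun T => ∑ i ∈ T, x i) (hprA s.1 s.2)
  clear_value Mf
  -- comparison function g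
  set g : (Fin n → ℝ) → ℝ := fun x => Mf x + (1/μ) * (Zf x / I - 1 + Real.log I) with hg
  clear_value g
  have hint1 : Integrable (fun x : Fin n → ℝ => Zf x / I - 1) P :=
    (hZint.div_const I).sub (integrable_const 1)
  have hInt_sub : Integrable (fun x => Zf x / I - 1 + Real.log I) P :=
    hint1.add (integrable_const _)
  have hg_int : Integrable g P := by
    rw [hg]
    exact hMint.add (hInt_sub.const_mul (1/μ))
  -- the integrand of interest
  set f : (Fin n → ℝ) → ℝ := fun x => (1/μ) * Real.log ((1 / (C.card : ℝ)) *
      ∑ S ∈ C, Real.exp (μ * ∑ i ∈ S, x i)) with hf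
  clear_value f
  have hQpos : ∀ x : Fin n → ℝ,
      0 < (1 / (C.card : ℝ)) * ∑ S ∈ C, rexp (μ * ∑ i ∈ S, x i) := by
    intro x
    exact mul_pos (by positivity) (Finset.sum_pos (fun S _ => Real.exp_pos _) hC)
  -- pointwise upper bound
  have h_ub : ∀ x, f x ≤ g x := by
    intro x
    simp only [hf, hg]
    have step1 : ∑ S ∈ C, rexp (μ * ∑ i ∈ S, x i)
        ≤ (∑ s ∈ C.attach, rexp (∑ i, cf s i * x i)) * rexp (μ * Mf x) := by
      rw [← Finset.sum_attach C (fun S => rexp (μ * ∑ i ∈ S, x i)), Finset.sum_mul]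
      refine Finset.sum_le_sum fun s _ => ?_
      rw [hcfsum s x]
      have e : μ * ∑ i ∈ (s : Finset (Fin n)), x i
          = μ * ((∑ i ∈ (s : Finset (Fin n)), x i) - ∑ i ∈ pr s.1 s.2, x i)
            + μ * ∑ i ∈ pr s.1 s.2, x i := by ring
      rw [e, Real.exp_add]
      exact mul_le_mul_of_nonneg_left
        (Real.exp_le_exp.2 (mul_le_mul_of_nonneg_left (hMle x s) hμ.le)) (Real.exp_pos _).le
    have step2 : Real.log ((1 / (C.card : ℝ)) * ∑ S ∈ C, rexp (μ * ∑ i ∈ S, x i))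
        ≤ Real.log (Zf x) + μ * Mf x := by
      have h1 : (1 / (C.card : ℝ)) * ∑ S ∈ C, rexp (μ * ∑ i ∈ S, x i)
          ≤ Zf x * rexp (μ * Mf x) := by
        calc (1 / (C.card : ℝ)) * ∑ S ∈ C, rexp (μ * ∑ i ∈ S, x i)
            ≤ (1 / (C.card : ℝ)) *
              ((∑ s ∈ C.attach, rexp (∑ i, cf s i * x i)) * rexp (μ * Mf x)) :=
              mul_le_mul_of_nonneg_left step1 (by positivity)
          _ = Zf x * rexp (μ * Mf x) := by rw [hZf]; ring
      calc Real.log ((1 / (C.card : ℝ)) * ∑ S ∈ C, rexp (μ * ∑ i ∈ S, x i))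
          ≤ Real.log (Zf x * rexp (μ * Mf x)) := Real.log_le_log (hQpos x) h1
        _ = Real.log (Zf x) + μ * Mf x := by
            rw [Real.log_mul (ne_of_gt (hZpos x)) (Real.exp_pos _).ne', Real.log_exp]
    have step3 : Real.log (Zf x) ≤ Zf x / I - 1 + Real.log I := by
      have h3 := Real.log_le_sub_one_of_pos (div_pos (hZpos x) hIpos)
      rw [Real.log_div (ne_of_gt (hZpos x)) (ne_of_gt hIpos)] at h3
      linarith
    have htot : Real.log ((1 / (C.card : ℝ)) * ∑ S ∈ C, rexp (μ * ∑ i ∈ S, x i))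
        ≤ μ * Mf x + (Zf x / I - 1 + Real.log I) := by linarith
    have hid : (1/μ) * (μ * Mf x) = Mf x := by
      rw [one_div, inv_mul_cancel_left₀ (ne_of_gt hμ)]
    calc (1/μ) * Real.log ((1 / (C.card : ℝ)) * ∑ S ∈ C, rexp (μ * ∑ i ∈ S, x i))
        ≤ (1/μ) * (μ * Mf x + (Zf x / I - 1 + Real.log I)) :=
          mul_le_mul_of_nonneg_left htot (by positivity)
      _ = Mf x + (1/μ) * (Zf x / I - 1 + Real.log I) := by rw [mul_add, hid]
  -- pointwise lower bound (for integrability)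
  obtain ⟨S₀, hS₀⟩ := hC
  have h_lb : ∀ x, (∑ i ∈ S₀, x i) - Real.log (C.card : ℝ) / μ ≤ f x := by
    intro x
    simp only [hf]
    have h1 : (1 / (C.card : ℝ)) * rexp (μ * ∑ i ∈ S₀, x i)
        ≤ (1 / (C.card : ℝ)) * ∑ S ∈ C, rexp (μ * ∑ i ∈ S, x i) :=
      mul_le_mul_of_nonneg_left
        (Finset.single_le_sum (fun S _ => (Real.exp_pos (μ * ∑ i ∈ S, x i)).le) hS₀)
        (by positivity)
    have h2 : Real.log ((1 / (C.card : ℝ)) * rexp (μ * ∑ i ∈ S₀, x i))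
        = μ * (∑ i ∈ S₀, x i) - Real.log (C.card : ℝ) := by
      rw [Real.log_mul (by positivity) (Real.exp_pos _).ne', Real.log_exp, one_div,
        Real.log_inv]
      ring
    have h3 := Real.log_le_log (mul_pos (one_div_pos.2 hNpos) (Real.exp_pos _)) h1
    rw [h2] at h3
    have h4 : (1/μ) * (μ * (∑ i ∈ S₀, x i) - Real.log (C.card : ℝ))
        ≤ (1/μ) * Real.log ((1 / (C.card : ℝ)) * ∑ S ∈ C, rexp (μ * ∑ i ∈ S, x i)) :=
      mul_le_mul_of_nonneg_left h3 (by positivity)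
    have h5 : (1/μ) * (μ * (∑ i ∈ S₀, x i) - Real.log (C.card : ℝ))
        = (∑ i ∈ S₀, x i) - Real.log (C.card : ℝ) / μ := by
      field_simp
    linarith
  -- integrability of f
  have hfmeas : Measurable f := by
    rw [hf]
    apply Measurable.const_mul
    apply Measurable.log
    apply Measurable.const_mul
    apply Finset.measurable_sum
    intro S _
    exact Real.measurable_exp.comp ((hXmeas S).const_mul μ)
  have hhint : Integrable (fun x : Fin n → ℝ =>
      (∑ i ∈ S₀, x i) - Real.log (C.card : ℝ) / μ) P :=
    (hXint S₀).sub (integrable_const _)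
  have hf_int : Integrable f P := by
    refine Integrable.mono' (hhint.abs.add hg_int.abs) hfmeas.aestronglyMeasurable
      (Filter.Eventually.of_forall fun x => ?_)
    have l1 := h_lb x
    have l2 := h_ub x
    have l3 := neg_abs_le ((∑ i ∈ S₀, x i) - Real.log (C.card : ℝ) / μ)
    have l4 := le_abs_self (g x)
    have l5 := abs_nonneg (g x)
    have l6 := abs_nonneg ((∑ i ∈ S₀, x i) - Real.log (C.card : ℝ) / μ)
    rw [Real.norm_eq_abs, abs_le]
    simp only [Pi.add_apply]
    constructor <;> linarith
  -- value of ∫ g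
  have hgval : ∫ x, g x ∂P = (∫ x, Mf x ∂P) + (1/μ) * Real.log I := by
    have e0 : ∫ x, g x ∂P
        = ∫ x, (Mf x + (1/μ) * (Zf x / I - 1 + Real.log I)) ∂P := by rw [hg]
    rw [e0, MeasureTheory.integral_add hMint (hInt_sub.const_mul (1/μ)),
      MeasureTheory.integral_const_mul,
      MeasureTheory.integral_add hint1 (integrable_const _),
      MeasureTheory.integral_sub (hZint.div_const I) (integrable_const 1),
      MeasureTheory.integral_div, ← hIdef]
    simp only [MeasureTheory.integral_const, measure_univ, probReal_univ, smul_eq_mul,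
      one_mul]
    rw [div_self (ne_of_gt hIpos)]
    ring
  -- conclusion
  have hlog : Real.log I ≤ μ ^ 2 * t ^ 2 / 2 := by
    have h6 := Real.log_le_log hIpos hIle
    rwa [Real.log_exp] at h6
  have e7 : (1/μ) * (μ ^ 2 * t ^ 2 / 2) = μ * t ^ 2 / 2 := by
    field_simp
  calc ∫ x, f x ∂P ≤ ∫ x, g x ∂P := MeasureTheory.integral_mono hf_int hg_int h_ub
    _ = (∫ x, Mf x ∂P) + (1/μ) * Real.log I := hgval
    _ ≤ (∫ x, Mf x ∂P) + (1/μ) * (μ ^ 2 * t ^ 2 / 2) :=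
        add_le_add_right (mul_le_mul_of_nonneg_left hlog (by positivity)) _
    _ = μ * t ^ 2 / 2 + ∫ x, Mf x ∂P := by rw [e7, add_comm]
end
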